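/- Let s ≥ 3 be an integer and T(i0, i1) = {(i, j) ∈ ℤ² : s·i0 ≤ i + j < s·(1 + i0) and s·i1 ≤ j − i < s·(1 + i1)}, with footprint under B(i,j) = i. Then for all (i0, i1), (i2, i3) ∈ ℤ², the footprints B⟨T(i0, i1)⟩ and B⟨T(i2, i3)⟩ have nonempty intersection if and only if |(i0 − i1) − (i2 − i3)| ≤ 1. In particular the consumer tiles of T(i0,i1) are exactly the three families {(i0 + p, i1 + p)}, {(i0 + p + 1, i1 + p)}, {(i0 + p − 1, i1 + p)} for p ∈ ℤ. -/
import Mathlib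

/-- Helper: an `i` satisfying the interval condition lies in the footprint. -/
lemma single_dep_mem_fp_aux (s i0 i1 i : ℤ) (hs : 0 < s)
    (h1 : s * (i0 - i1) - s < 2 * i) (h2 : 2 * i < s * (i0 - i1) + s) :
    ∃ j : ℤ, (s * i0 ≤ i + j ∧ i + j < s * (1 + i0)) ∧
      (s * i1 ≤ j - i ∧ j - i < s * (1 + i1)) := by
  refine ⟨max (s * i0 - i) (s * i1 + i), ⟨?_, ?_⟩, ?_, ?_⟩
  · have := le_max_left (s * i0 - i) (s * i1 + i); linarith
  · have : max (s * i0 - i) (s * i1 + i) < s * (1 + i0) - i :=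
      max_lt (by linarith) (by linarith)
    linarith
  · have := le_max_right (s * i0 - i) (s * i1 + i); linarith
  · have : max (s * i0 - i) (s * i1 + i) < s * (1 + i1) + i :=
      max_lt (by linarith) (by linarith)
    linarith

/-- for `s ≥ 3`, the footprints of tiles `T(i0,i1)` and `T(i2,i3)` under
`B(i,j) = i` overlap iff `|(i0 − i1) − (i2 − i3)| ≤ 1`; in particular the consumer tiles
of `T(i0,i1)` are exactly the three families `(i0+p, i1+p)`, `(i0+p+1, i1+p)`,
`(i0+p−1, i1+p)` for `p ∈ ℤ`. -/
theorem single_dep_consumer_tiles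
    (s : ℤ) (hs : 3 ≤ s)
    (T : ℤ → ℤ → Set (ℤ × ℤ))
    (hT : ∀ i0 i1, T i0 i1 = {p : ℤ × ℤ |
        (s * i0 ≤ p.1 + p.2 ∧ p.1 + p.2 < s * (1 + i0)) ∧
        (s * i1 ≤ p.2 - p.1 ∧ p.2 - p.1 < s * (1 + i1))})
    (fp : ℤ → ℤ → Set ℤ)
    (hfp : ∀ i0 i1, fp i0 i1 = {i : ℤ | ∃ j : ℤ, (i, j) ∈ T i0 i1}) :
    (∀ i0 i1 i2 i3 : ℤ,
      (fp i0 i1 ∩ fp i2 i3).Nonempty ↔ |(i0 - i1) - (i2 - i3)| ≤ 1) ∧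
    (∀ i0 i1 : ℤ,
      {q : ℤ × ℤ | (fp i0 i1 ∩ fp q.1 q.2).Nonempty} =
        {q : ℤ × ℤ | ∃ p : ℤ,
          q = (i0 + p, i1 + p) ∨ q = (i0 + p + 1, i1 + p) ∨ q = (i0 + p - 1, i1 + p)}) := by
  have hspos : (0 : ℤ) < s := by omega
  have key : ∀ i0 i1 i2 i3 : ℤ,
      (fp i0 i1 ∩ fp i2 i3).Nonempty ↔ |(i0 - i1) - (i2 - i3)| ≤ 1 := by
    intro i0 i1 i2 i3
    constructor
    · rintro ⟨i, h1, h2⟩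
      rw [hfp] at h1 h2
      obtain ⟨j1, hj1⟩ := h1
      obtain ⟨j2, hj2⟩ := h2
      rw [hT] at hj1 hj2
      simp only [Set.mem_setOf_eq] at hj1 hj2
      obtain ⟨⟨a1, a2⟩, a3, a4⟩ := hj1
      obtain ⟨⟨b1, b2⟩, b3, b4⟩ := hj2
      -- s*(i0-i1) - s < 2i < s*(i0-i1) + s, same for (i2,i3)
      have c1 : s * (i0 - i1) - s < 2 * i := by nlinarith
      have c2 : 2 * i < s * (i0 - i1) + s := by nlinarith
      have c3 : s * (i2 - i3) - s < 2 * i := by nlinarith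
      have c4 : 2 * i < s * (i2 - i3) + s := by nlinarith
      have e1 : s * ((i0 - i1) - (i2 - i3) - 2) < 0 := by nlinarith
      have e2 : s * ((i2 - i3) - (i0 - i1) - 2) < 0 := by nlinarith
      have f1 : (i0 - i1) - (i2 - i3) - 2 < 0 := by
        by_contra h
        push_neg at h
        nlinarith
      have f2 : (i2 - i3) - (i0 - i1) - 2 < 0 := by
        by_contra h
        push_neg at h
        nlinarith
      rw [abs_le]
      omega
    · intro h
      rw [abs_le] at h
      have hmem : ∀ a0 a1 i : ℤ, s * (a0 - a1) - s < 2 * i → 2 * i < s * (a0 - a1) + s →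
          i ∈ fp a0 a1 := by
        intro a0 a1 i hA hB
        rw [hfp, hT]
        simp only [Set.mem_setOf_eq]
        exact single_dep_mem_fp_aux s a0 a1 i hspos hA hB
      have hcase : (i0 - i1) - (i2 - i3) = -1 ∨ (i0 - i1) - (i2 - i3) = 0 ∨
          (i0 - i1) - (i2 - i3) = 1 := by omega
      rcases hcase with h' | h' | h'
      · -- i0 - i1 is the smaller
        refine ⟨(s * (i0 - i1) + 2) / 2, ?_, ?_⟩
        · have hb : s * (i0 - i1) + 1 ≤ 2 * ((s * (i0 - i1) + 2) / 2) ∧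
              2 * ((s * (i0 - i1) + 2) / 2) ≤ s * (i0 - i1) + 2 := by omega
          exact hmem _ _ _ (by linarith [hb.1]) (by linarith [hb.2])
        · have hb : s * (i0 - i1) + 1 ≤ 2 * ((s * (i0 - i1) + 2) / 2) ∧
              2 * ((s * (i0 - i1) + 2) / 2) ≤ s * (i0 - i1) + 2 := by omega
          have hE : s * (i2 - i3) = s * (i0 - i1) + s := by
            have : i2 - i3 = (i0 - i1) + 1 := by omega
            rw [this]; ring
          exact hmem _ _ _ (by linarith [hb.1]) (by linarith [hb.2])
      · refine ⟨(s * (i0 - i1) + 2) / 2, ?_, ?_⟩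
        · have hb : s * (i0 - i1) + 1 ≤ 2 * ((s * (i0 - i1) + 2) / 2) ∧
              2 * ((s * (i0 - i1) + 2) / 2) ≤ s * (i0 - i1) + 2 := by omega
          exact hmem _ _ _ (by linarith [hb.1]) (by linarith [hb.2])
        · have hb : s * (i0 - i1) + 1 ≤ 2 * ((s * (i0 - i1) + 2) / 2) ∧
              2 * ((s * (i0 - i1) + 2) / 2) ≤ s * (i0 - i1) + 2 := by omega
          have hE : s * (i2 - i3) = s * (i0 - i1) := by
            have : i2 - i3 = i0 - i1 := by omega
            rw [this]
          exact hmem _ _ _ (by linarith [hb.1]) (by linarith [hb.2])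
      · -- i2 - i3 is the smaller
        refine ⟨(s * (i2 - i3) + 2) / 2, ?_, ?_⟩
        · have hb : s * (i2 - i3) + 1 ≤ 2 * ((s * (i2 - i3) + 2) / 2) ∧
              2 * ((s * (i2 - i3) + 2) / 2) ≤ s * (i2 - i3) + 2 := by omega
          have hE : s * (i0 - i1) = s * (i2 - i3) + s := by
            have : i0 - i1 = (i2 - i3) + 1 := by omega
            rw [this]; ring
          exact hmem _ _ _ (by linarith [hb.1]) (by linarith [hb.2])
        · have hb : s * (i2 - i3) + 1 ≤ 2 * ((s * (i2 - i3) + 2) / 2) ∧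
              2 * ((s * (i2 - i3) + 2) / 2) ≤ s * (i2 - i3) + 2 := by omega
          exact hmem _ _ _ (by linarith [hb.1]) (by linarith [hb.2])
  constructor
  · exact key
  · intro i0 i1
    ext ⟨q1, q2⟩
    simp only [Set.mem_setOf_eq]
    rw [key]
    constructor
    · intro h
      rw [abs_le] at h
      refine ⟨q2 - i1, ?_⟩
      have hcase : (i0 - i1) - (q1 - q2) = -1 ∨ (i0 - i1) - (q1 - q2) = 0 ∨
          (i0 - i1) - (q1 - q2) = 1 := by omega
      rcases hcase with h' | h' | h'
      · right; left; rw [Prod.mk.injEq]; omega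
      · left; rw [Prod.mk.injEq]; omega
      · right; right; rw [Prod.mk.injEq]; omega
    · rintro ⟨p, h | h | h⟩ <;>
        rw [Prod.mk.injEq] at h <;>
        obtain ⟨h1, h2⟩ := h <;>
        rw [abs_le] <;>
        omega
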